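/- Consider the entropy-regularized multiplicative weights update π_i^{(t+1)}(a_i) ∝ (π_i^{(t)}(a_i))^{1−η^{(t)}τ} exp(η^{(t)} [r_i π^{(t)}]_{a_i}) in a game with payoffs bounded by 0 ≤ [r_i π]_{a_i} ≤ R, starting from uniform π_i^{(0)}. Then for every t ≥ 0 and every a_i ∈ A_i, π_i^{(t)}(a_i) ≥ (1/|A_i|) exp(−R/τ), provided 0 ≤ η^{(t)} τ ≤ 1; i.e., all iterates remain in the set Ω_i = {π_i ∈ Δ(A_i) : π_i(a_i) ≥ (1/|A_i|) e^{−R/τ} for all a_i}. -/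

import Mathlib

open Finset

/-- Jensen-type bound: if `π` is a probability vector on a finite type, then
`∑ a, π a ^ p ≤ |A| ^ (1 - p)` for `0 ≤ p ≤ 1`. -/
lemma sum_rpow_le_card_rpow {A : Type*} [Fintype A] [Nonempty A]
    (π : A → ℝ) (hnn : ∀ a, 0 ≤ π a) (hsum : ∑ a, π a = 1)
    {p : ℝ} (hp0 : 0 ≤ p) (hp1 : p ≤ 1) :
    ∑ a, π a ^ p ≤ (Fintype.card A : ℝ) ^ (1 - p) := by
  rcases eq_or_lt_of_le hp0 with h0 | h0
  · simp [← h0, Real.rpow_zero, Finset.card_univ]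
  rcases eq_or_lt_of_le hp1 with h1 | h1
  · simp [h1, Real.rpow_one, hsum]
  have hconj : (1 / p).HolderConjugate (1 / (1 - p)) := by
    rw [Real.holderConjugate_iff]; constructor
    · rw [lt_div_iff₀ h0]; linarith
    · simp only [one_div, inv_inv]; ring
  have := Real.inner_le_Lp_mul_Lq_of_nonneg (univ : Finset A) hconj
      (f := fun a => π a ^ p) (g := fun _ => (1 : ℝ))
      (fun a _ => Real.rpow_nonneg (hnn a) p) (fun a _ => zero_le_one)
  simp only [mul_one, Real.one_rpow, one_div_one_div] at this
  calc ∑ a, π a ^ p ≤ (∑ a, (π a ^ p) ^ (1 / p)) ^ p * (∑ _a : A, (1:ℝ)) ^ (1 - p) := this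
    _ = (Fintype.card A : ℝ) ^ (1 - p) := by
        have : ∀ a, (π a ^ p) ^ (1 / p) = π a := by
          intro a
          rw [← Real.rpow_mul (hnn a), mul_one_div, div_self h0.ne', Real.rpow_one]
        simp only [this, hsum, Real.one_rpow, one_mul, Finset.sum_const,
          Finset.card_univ, nsmul_eq_mul, mul_one]

/-- Iterates of the entropy-regularized multiplicative weights update, started from the uniform
distribution and with payoffs in `[0, R]`, stay in
`Ω = {π ∈ Δ(A) : π(a) ≥ (1/|A|) e^{−R/τ} for all a}`, provided `0 ≤ η_t τ ≤ 1`. -/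
theorem regularized_MWU_iterates_lower_bound {A : Type*} [Fintype A] [Nonempty A]
    (τ R : ℝ) (hτ : 0 < τ) (hR : 0 ≤ R)
    (η : ℕ → ℝ) (hη0 : ∀ t, 0 < η t) (hητ : ∀ t, η t * τ ≤ 1)
    -- u t a = [r_i π^{(t)}]_a : the expected payoff of pure action a at iteration t
    (u : ℕ → A → ℝ) (hunn : ∀ t a, 0 ≤ u t a) (hub : ∀ t a, u t a ≤ R)
    (π : ℕ → A → ℝ)
    (hinit : ∀ a, π 0 a = 1 / (Fintype.card A : ℝ))
    (hupdate : ∀ t a, π (t + 1) a =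
      (π t a) ^ (1 - η t * τ) * Real.exp (η t * u t a) /
        ∑ b, (π t b) ^ (1 - η t * τ) * Real.exp (η t * u t b)) :
    ∀ t a, (1 / (Fintype.card A : ℝ)) * Real.exp (-(R / τ)) ≤ π t a := by
  set n : ℝ := (Fintype.card A : ℝ) with hn
  have hnpos : (0 : ℝ) < n := by
    rw [hn]; exact_mod_cast Fintype.card_pos
  set c : ℝ := (1 / n) * Real.exp (-(R / τ)) with hc
  have hcpos : 0 < c := by positivity
  have key : ∀ t, (∀ a, c ≤ π t a) ∧ (∑ a, π t a) = 1 := by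
    intro t
    induction t with
    | zero =>
      constructor
      · intro a
        rw [hinit a]
        have h1 : Real.exp (-(R / τ)) ≤ 1 := by
          rw [Real.exp_le_one_iff]
          have : 0 ≤ R / τ := div_nonneg hR hτ.le
          linarith
        calc c = (1 / n) * Real.exp (-(R / τ)) := rfl
          _ ≤ (1 / n) * 1 := by
              apply mul_le_mul_of_nonneg_left h1 (by positivity)
          _ = 1 / n := mul_one _
      · simp [hinit, Finset.card_univ]; exact mul_inv_cancel₀ hnpos.ne'
    | succ t ih =>
      obtain ⟨hlb, hsum⟩ := ih
      set s : ℝ := η t * τ with hs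
      have hspos : 0 < s := mul_pos (hη0 t) hτ
      have hs1 : s ≤ 1 := hητ t
      set p : ℝ := 1 - s with hp
      have hp0 : 0 ≤ p := by simp [hp]; linarith
      have hp1 : p ≤ 1 := by simp [hp]; linarith
      have hπpos : ∀ a, 0 < π t a := fun a => lt_of_lt_of_le hcpos (hlb a)
      set D : ℝ := ∑ b, (π t b) ^ p * Real.exp (η t * u t b) with hD
      have hDpos : 0 < D := by
        apply Finset.sum_pos _ univ_nonempty
        intro b _
        exact mul_pos (Real.rpow_pos_of_pos (hπpos b) p) (Real.exp_pos _)
      -- upper bound on D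
      have hDle : D ≤ Real.exp (η t * R) * n ^ s := by
        have h1 : D ≤ ∑ b, (π t b) ^ p * Real.exp (η t * R) := by
          apply Finset.sum_le_sum
          intro b _
          apply mul_le_mul_of_nonneg_left _ (Real.rpow_nonneg (hπpos b).le p)
          exact Real.exp_le_exp.mpr (mul_le_mul_of_nonneg_left (hub t b) (hη0 t).le)
        have h2 : ∑ b, (π t b) ^ p ≤ n ^ (1 - p) :=
          sum_rpow_le_card_rpow (π t) (fun a => (hπpos a).le) hsum hp0 hp1
        have h3 : (1 : ℝ) - p = s := by ring
        calc D ≤ ∑ b, (π t b) ^ p * Real.exp (η t * R) := h1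
          _ = (∑ b, (π t b) ^ p) * Real.exp (η t * R) := by rw [← Finset.sum_mul]
          _ ≤ n ^ s * Real.exp (η t * R) := by
              rw [← h3]
              exact mul_le_mul_of_nonneg_right h2 (Real.exp_pos _).le
          _ = Real.exp (η t * R) * n ^ s := mul_comm _ _
      -- key identity : c ^ p = c * exp(η R) * n ^ s
      have hceq : c ^ p = c * (Real.exp (η t * R) * n ^ s) := by
        have hcinv : c⁻¹ = n * Real.exp (R / τ) := by
          rw [hc]
          rw [mul_inv, one_div, inv_inv, ← Real.exp_neg, neg_neg]
        have h1 : c ^ p = c ^ (1 : ℝ) * c ^ (-s) := by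
          rw [← Real.rpow_add hcpos, hp]; ring_nf
        have h2 : c ^ (-s) = (c⁻¹) ^ s := by
          rw [Real.rpow_neg hcpos.le, Real.inv_rpow hcpos.le]
        have h3 : (c⁻¹) ^ s = n ^ s * Real.exp (η t * R) := by
          rw [hcinv, Real.mul_rpow hnpos.le (Real.exp_pos _).le, ← Real.exp_mul]
          congr 2
          field_simp [hs]
          ring
        rw [h1, h2, h3, Real.rpow_one]
        ring
      constructor
      · intro a
        rw [hupdate t a]
        rw [le_div_iff₀ hDpos]
        calc c * D ≤ c * (Real.exp (η t * R) * n ^ s) :=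
              mul_le_mul_of_nonneg_left hDle hcpos.le
          _ = c ^ p := hceq.symm
          _ ≤ (π t a) ^ p := Real.rpow_le_rpow hcpos.le (hlb a) hp0
          _ ≤ (π t a) ^ p * Real.exp (η t * u t a) := by
              nth_rewrite 1 [← mul_one ((π t a) ^ p)]
              apply mul_le_mul_of_nonneg_left _ (Real.rpow_nonneg (hπpos a).le p)
              exact Real.one_le_exp (mul_nonneg (hη0 t).le (hunn t a))
      · simp only [hupdate t]
        rw [← Finset.sum_div, ← hD, div_self hDpos.ne']
  intro t a
  exact (key t).1 a
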